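/- arXiv:1304.3179 — 4 statements merged into one kernel-verified Lean document; each statement's English description precedes it below -/
import Mathlib

section
/- Fix the block setup and the function $g_S(A,\Omega)$ defined in the context, with $A \in \mathbb{C}^{n_B \times n_M}$ arbitrary and $\Omega \in \mathbb{C}^{n_B \times n_B}$ Hermitian positive definite. Then $g$ is supermodular and normalized: $g_{\emptyset}(A,\Omega) = 0$, and for all subsets $S, T \subseteq \{1,\dots,N_B\}$, $g_S(A,\Omega) + g_T(A,\Omega) \le g_{S \cup T}(A,\Omega) + g_{S \cap T}(A,\Omega)$. -/
open Matrix
open scoped ComplexOrder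

set_option linter.unusedSectionVars false

/-- Base-2 logarithm of the (real part of the) determinant of a complex matrix. -/
noncomputable def logdet2 {ι : Type*} [Fintype ι] [DecidableEq ι]
    (M : Matrix ι ι ℂ) : ℝ :=
  Real.logb 2 M.det.re

/-- Block submatrix `M_{S,T}`: keep the rows whose block index lies in `S` and the
columns whose block index lies in `T`. -/
def blockSub {NB : ℕ} {nb : Fin NB → ℕ}
    (M : Matrix (Σ i, Fin (nb i)) (Σ i, Fin (nb i)) ℂ) (S T : Finset (Fin NB)) :
    Matrix {p : Σ i, Fin (nb i) // p.1 ∈ S} {p : Σ i, Fin (nb i) // p.1 ∈ T} ℂ :=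
  M.submatrix Subtype.val Subtype.val

/-- The backhaul constraint function
`g_S(A,Ω) = ∑_{i ∈ S} log₂ det((AA†)_{i,i} + Ω_{i,i}) - log₂ det(Ω_{S,S})`. -/
noncomputable def gFun {NB nM : ℕ} {nb : Fin NB → ℕ}
    (A : Matrix (Σ i, Fin (nb i)) (Fin nM) ℂ)
    (Ω : Matrix (Σ i, Fin (nb i)) (Σ i, Fin (nb i)) ℂ) (S : Finset (Fin NB)) : ℝ :=
  (∑ i ∈ S, logdet2 (blockSub (A * Aᴴ) {i} {i} + blockSub Ω {i} {i})) -
    logdet2 (blockSub Ω S S)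


section Aux

variable {ι : Type*} [Fintype ι] [DecidableEq ι]

lemma extend_dotProduct {m : Type*} [Fintype m] {e : m → ι} (he : Function.Injective e)
    (x : m → ℂ) (w : ι → ℂ) :
    Function.extend e x 0 ⬝ᵥ w = x ⬝ᵥ fun i => w (e i) := by
  classical
  unfold dotProduct
  rw [← Finset.sum_subset (Finset.subset_univ (Finset.univ.image e))]
  · rw [Finset.sum_image (fun a _ b _ h => he h)]
    refine Finset.sum_congr rfl fun i _ => ?_
    rw [he.extend_apply]
  · intro j _ hj
    have : ¬ ∃ i, e i = j := by
      rintro ⟨i, rfl⟩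
      exact hj (Finset.mem_image_of_mem e (Finset.mem_univ i))
    rw [Function.extend_apply' _ _ _ this, Pi.zero_apply, zero_mul]

lemma dotProduct_extend {m : Type*} [Fintype m] {e : m → ι} (he : Function.Injective e)
    (x : m → ℂ) (w : ι → ℂ) :
    w ⬝ᵥ Function.extend e x 0 = (fun i => w (e i)) ⬝ᵥ x := by
  rw [dotProduct_comm, extend_dotProduct he, dotProduct_comm]

lemma star_extend {m : Type*} {e : m → ι} (he : Function.Injective e) (x : m → ℂ) :
    star (Function.extend e x 0) = Function.extend e (star x) 0 := by
  classical
  funext j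
  by_cases h : ∃ i, e i = j
  · rcases h with ⟨i, rfl⟩
    rw [Pi.star_apply, he.extend_apply, he.extend_apply, Pi.star_apply]
  · rw [Pi.star_apply, Function.extend_apply' _ _ _ h, Function.extend_apply' _ _ _ h]
    simp

/-- A principal submatrix (along an injective map) of a positive definite matrix is
positive definite. -/
lemma posDef_submatrix {m : Type*} [Fintype m] {M : Matrix ι ι ℂ} (hM : M.PosDef)
    {e : m → ι} (he : Function.Injective e) : (M.submatrix e e).PosDef := by
  classical
  refine Matrix.PosDef.of_dotProduct_mulVec_pos (hM.1.submatrix e) fun x hx => ?_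
  set y : ι → ℂ := Function.extend e x 0 with hy
  have hyne : y ≠ 0 := by
    intro h
    apply hx
    funext i
    have := congrFun h (e i)
    rwa [hy, he.extend_apply, Pi.zero_apply] at this
  have key : star y ⬝ᵥ (M *ᵥ y) = star x ⬝ᵥ (M.submatrix e e *ᵥ x) := by
    rw [hy, star_extend he, extend_dotProduct he]
    congr 1
    funext i
    show (fun j => M (e i) j) ⬝ᵥ Function.extend e x 0 = _
    rw [dotProduct_extend he]
    rfl
  have := hM.dotProduct_mulVec_pos hyne
  rwa [key] at this

variable {M : Matrix ι ι ℂ}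

/-- Principal submatrix of `M` given by a finset of indices. -/
def msub (M : Matrix ι ι ℂ) (s : Finset ι) : Matrix s s ℂ :=
  M.submatrix Subtype.val Subtype.val

lemma msub_posDef (hM : M.PosDef) (s : Finset ι) : (msub M s).PosDef :=
  posDef_submatrix hM Subtype.val_injective

/-- Real determinant of a principal submatrix. -/
noncomputable def Dd (M : Matrix ι ι ℂ) (s : Finset ι) : ℝ := ((msub M s).det).re

noncomputable def Ff (M : Matrix ι ι ℂ) (s : Finset ι) : ℝ := Real.logb 2 (Dd M s)

lemma det_eq_re {m : Type*} [Fintype m] [DecidableEq m] (N : Matrix m m ℂ) (hN : N.PosDef) :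
    N.det = (N.det.re : ℂ) := by
  have := hN.det_pos
  rw [Complex.lt_def] at this
  have him : N.det.im = 0 := by simpa using this.2.symm
  exact Complex.ext (by simp) (by simp [him])

lemma Dd_pos (hM : M.PosDef) (s : Finset ι) : 0 < Dd M s := by
  have := (msub_posDef hM s).det_pos
  rw [Complex.lt_def] at this
  simpa [Dd] using this.1

/-- Column vector of `M` restricted to rows in `s`, at column `k`. -/
def vcol (M : Matrix ι ι ℂ) (s : Finset ι) (k : ι) : s → ℂ := fun x => M x.1 k

noncomputable def Qre (M : Matrix ι ι ℂ) (s : Finset ι) (k : ι) : ℝ :=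
  (star (vcol M s k) ⬝ᵥ ((msub M s)⁻¹ *ᵥ vcol M s k)).re

noncomputable def dmar (M : Matrix ι ι ℂ) (s : Finset ι) (k : ι) : ℝ :=
  (M k k).re - Qre M s k

/-- Equivalence `s ⊕ Unit ≃ insert k s`. -/
def insEquiv (s : Finset ι) (k : ι) (hk : k ∉ s) : (s ⊕ Unit) ≃ (insert k s : Finset ι) where
  toFun := Sum.elim (fun y => ⟨y.1, Finset.mem_insert_of_mem y.2⟩)
    (fun _ => ⟨k, Finset.mem_insert_self k s⟩)
  invFun z := if h : (z : ι) ∈ s then Sum.inl ⟨z, h⟩ else Sum.inr ()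
  left_inv := by
    rintro (y | ⟨⟩)
    · simp [y.2]
    · simp [hk]
  right_inv := by
    rintro ⟨z, hz⟩
    rcases Finset.mem_insert.mp hz with h | h
    · subst h
      simp [hk]
    · simp [h]

lemma Dd_insert (hM : M.PosDef) (s : Finset ι) (k : ι) (hk : k ∉ s) :
    Dd M (insert k s) = Dd M s * dmar M s k := by
  classical
  set A := msub M s with hA
  have hApd : A.PosDef := msub_posDef hM s
  letI : Invertible A := hApd.isUnit.invertible
  set Bc : Matrix s Unit ℂ := Matrix.of (fun y _ => M y.1 k) with hBc
  set Cr : Matrix Unit s ℂ := Matrix.of (fun _ y => M k y.1) with hCr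
  set Dk : Matrix Unit Unit ℂ := Matrix.of (fun _ _ => M k k) with hDk
  have hmat : (msub M (insert k s)).submatrix (insEquiv s k hk) (insEquiv s k hk)
      = fromBlocks A Bc Cr Dk := by
    ext i j
    rcases i with i | i <;> rcases j with j | j <;> rfl
  have hdet : (msub M (insert k s)).det = A.det * (Dk - Cr * ⅟A * Bc).det := by
    rw [← det_submatrix_equiv_self (insEquiv s k hk), hmat, det_fromBlocks₁₁]
  have hscalar : (Dk - Cr * ⅟A * Bc).det
      = M k k - star (vcol M s k) ⬝ᵥ (A⁻¹ *ᵥ vcol M s k) := by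
    rw [Matrix.det_unique, Matrix.invOf_eq_nonsing_inv]
    show Dk () () - (Cr * A⁻¹ * Bc) () () = _
    congr 1
    rw [Matrix.mul_assoc, Matrix.mul_apply]
    unfold dotProduct
    refine Finset.sum_congr rfl fun i _ => ?_
    have h1 : Cr () i = star (vcol M s k i) := (hM.1.apply k i.1).symm
    rw [h1]
    rfl
  have hAdet : A.det = ((Dd M s : ℝ) : ℂ) := det_eq_re A hApd
  unfold Dd dmar Qre
  rw [hdet, hscalar, hAdet, Complex.re_ofReal_mul, Complex.sub_re]
  simp
  exact Or.inl rfl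

lemma dmar_pos (hM : M.PosDef) (s : Finset ι) (k : ι) (hk : k ∉ s) : 0 < dmar M s k := by
  have h := Dd_insert hM s k hk
  have h1 := Dd_pos hM (insert k s)
  have h2 := Dd_pos hM s
  nlinarith

lemma Ff_insert (hM : M.PosDef) (s : Finset ι) (k : ι) (hk : k ∉ s) :
    Ff M (insert k s) = Ff M s + Real.logb 2 (dmar M s k) := by
  unfold Ff
  rw [Dd_insert hM s k hk, Real.logb_mul (Dd_pos hM s).ne' (dmar_pos hM s k hk).ne']

/-- Monotonicity of the quadratic form `v† (M_s)⁻¹ v` in the index set. -/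
lemma Qre_mono (hM : M.PosDef) {s t : Finset ι} (hst : s ⊆ t) (k : ι) :
    Qre M s k ≤ Qre M t k := by
  classical
  set A := msub M s with hA
  set B := msub M t with hB
  have hApd : A.PosDef := msub_posDef hM s
  have hBpd : B.PosDef := msub_posDef hM t
  have hAdet : IsUnit A.det := (Matrix.isUnit_iff_isUnit_det A).mp hApd.isUnit
  have hBdet : IsUnit B.det := (Matrix.isUnit_iff_isUnit_det B).mp hBpd.isUnit
  set e : s → t := fun x => ⟨x.1, hst x.2⟩ with he'
  have he : Function.Injective e := by
    intro a b h
    have h2 := congrArg Subtype.val h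
    exact Subtype.ext h2
  set v : t → ℂ := vcol M t k with hv
  set vs : s → ℂ := vcol M s k with hvs
  have hve : (fun i => v (e i)) = vs := rfl
  set x₀ : s → ℂ := A⁻¹ *ᵥ vs with hx₀
  set y : t → ℂ := Function.extend e x₀ 0 with hy
  set u : t → ℂ := B⁻¹ *ᵥ v with hu
  have hAx₀ : A *ᵥ x₀ = vs := by
    rw [hx₀, Matrix.mulVec_mulVec, Matrix.mul_nonsing_inv _ hAdet, Matrix.one_mulVec]
  have hBu : B *ᵥ u = v := by
    rw [hu, Matrix.mulVec_mulVec, Matrix.mul_nonsing_inv _ hBdet, Matrix.one_mulVec]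
  have hsub : B.submatrix e e = A := by
    ext i j
    rfl
  have hBy : ∀ i, (B *ᵥ y) (e i) = vs i := by
    intro i
    show (fun j => B (e i) j) ⬝ᵥ y = vs i
    rw [hy, dotProduct_extend he]
    show (A *ᵥ x₀) i = vs i
    rw [hAx₀]
  -- the four terms
  have hT1 : star y ⬝ᵥ (B *ᵥ y) = star x₀ ⬝ᵥ vs := by
    rw [hy, star_extend he, extend_dotProduct he]
    congr 1
    funext i
    exact hBy i
  have hT2 : star y ⬝ᵥ v = star x₀ ⬝ᵥ vs := by
    rw [hy, star_extend he, extend_dotProduct he]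
    rfl
  have hstarU : star u = star v ᵥ* B⁻¹ := by
    rw [hu, Matrix.star_mulVec, Matrix.conjTranspose_nonsing_inv, hBpd.1]
  have hT3 : star u ⬝ᵥ (B *ᵥ y) = star vs ⬝ᵥ x₀ := by
    rw [hstarU, Matrix.dotProduct_mulVec, Matrix.vecMul_vecMul,
      Matrix.nonsing_inv_mul _ hBdet, Matrix.vecMul_one, hy, dotProduct_extend he]
    rfl
  have hT4 : star u ⬝ᵥ v = star v ⬝ᵥ (B⁻¹ *ᵥ v) := by
    rw [hstarU, ← Matrix.dotProduct_mulVec]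
  have hconj : star x₀ ⬝ᵥ vs = star (star vs ⬝ᵥ x₀) := Matrix.star_dotProduct _ _
  -- positivity
  have hpsd : 0 ≤ (star (y - u) ⬝ᵥ (B *ᵥ (y - u))).re := by
    have := hBpd.posSemidef.dotProduct_mulVec_nonneg (y - u)
    rw [Complex.le_def] at this
    simpa using this.1
  have hexp : star (y - u) ⬝ᵥ (B *ᵥ (y - u))
      = star y ⬝ᵥ (B *ᵥ y) - star y ⬝ᵥ v - star u ⬝ᵥ (B *ᵥ y) + star u ⬝ᵥ v := by
    rw [Matrix.mulVec_sub, hBu, star_sub, sub_dotProduct, dotProduct_sub,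
      dotProduct_sub]
    ring
  rw [hexp, hT1, hT2, hT3, hT4] at hpsd
  have hQs : (star vs ⬝ᵥ x₀).re = Qre M s k := rfl
  have hQt : (star v ⬝ᵥ (B⁻¹ *ᵥ v)).re = Qre M t k := rfl
  rw [hconj] at hpsd
  have hst1 : (star (star vs ⬝ᵥ x₀)).re = (star vs ⬝ᵥ x₀).re := by
    simp [Complex.star_def]
  rw [Complex.add_re, Complex.sub_re, Complex.sub_re, hst1, hQs, hQt] at hpsd
  linarith

lemma marginal_mono (hM : M.PosDef) {s t : Finset ι} (hst : s ⊆ t) {k : ι} (hkt : k ∉ t) :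
    Ff M (insert k t) - Ff M t ≤ Ff M (insert k s) - Ff M s := by
  have hks : k ∉ s := fun h => hkt (hst h)
  rw [Ff_insert hM t k hkt, Ff_insert hM s k hks]
  have h1 : Real.logb 2 (dmar M t k) ≤ Real.logb 2 (dmar M s k) := by
    apply Real.logb_le_logb_of_le one_lt_two (dmar_pos hM t k hkt)
    have := Qre_mono hM hst k
    unfold dmar
    linarith
  linarith

lemma Ff_step (hM : M.PosDef) {s t : Finset ι} (hst : s ⊆ t) (r : Finset ι)
    (hrt : Disjoint r t) : Ff M (t ∪ r) - Ff M t ≤ Ff M (s ∪ r) - Ff M s := by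
  classical
  induction r using Finset.induction_on with
  | empty => simp
  | @insert k r hkr IH =>
    rw [Finset.disjoint_insert_left] at hrt
    obtain ⟨hkt, hrt'⟩ := hrt
    have hkur : k ∉ t ∪ r := by
      simp only [Finset.mem_union]
      tauto
    have hsub : s ∪ r ⊆ t ∪ r := Finset.union_subset_union_left hst
    have hmono := marginal_mono hM hsub hkur
    have IH' := IH hrt'
    rw [Finset.union_insert]
    rw [Finset.union_insert]
    linarith

lemma Ff_submodular (hM : M.PosDef) (s t : Finset ι) :
    Ff M (s ∪ t) + Ff M (s ∩ t) ≤ Ff M s + Ff M t := by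
  classical
  have hd : Disjoint (t \ s) s := Finset.sdiff_disjoint
  have h := Ff_step hM (Finset.inter_subset_left (s₂ := t)) (t \ s) hd
  rw [Finset.union_sdiff_self_eq_union] at h
  have h2 : s ∩ t ∪ t \ s = t := by
    rw [Finset.inter_comm]
    ext x
    simp only [Finset.mem_union, Finset.mem_inter, Finset.mem_sdiff]
    tauto
  rw [h2] at h
  linarith

end Aux





/-- Reindexing equivalence between the two descriptions of block index subsets. -/
def sigEquiv {NB : ℕ} {nb : Fin NB → ℕ} (S : Finset (Fin NB)) :
    {p : Σ i, Fin (nb i) // p.1 ∈ S}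
      ≃ {p : Σ i, Fin (nb i) // p ∈ Finset.univ.filter (fun p : Σ i, Fin (nb i) => p.1 ∈ S)} where
  toFun p := ⟨p.1, Finset.mem_filter.mpr ⟨Finset.mem_univ _, p.2⟩⟩
  invFun q := ⟨q.1, (Finset.mem_filter.mp q.2).2⟩
  left_inv p := rfl
  right_inv q := rfl

/-- `g` is normalized and supermodular. -/
theorem gFun_normalized_supermodular {NB nM : ℕ} {nb : Fin NB → ℕ}
    (A : Matrix (Σ i, Fin (nb i)) (Fin nM) ℂ)
    (Ω : Matrix (Σ i, Fin (nb i)) (Σ i, Fin (nb i)) ℂ) (hΩ : Ω.PosDef) :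
    gFun A Ω ∅ = 0 ∧
      ∀ S T : Finset (Fin NB),
        gFun A Ω S + gFun A Ω T ≤ gFun A Ω (S ∪ T) + gFun A Ω (S ∩ T) := by
  classical
  -- translate `blockSub` determinants into the `Ff` framework
  have glue : ∀ S : Finset (Fin NB),
      logdet2 (blockSub Ω S S) = Ff Ω (Finset.univ.filter (fun p : Σ i, Fin (nb i) => p.1 ∈ S)) := by
    intro S
    have hmat : blockSub Ω S S
        = (msub Ω (Finset.univ.filter (fun p : Σ i, Fin (nb i) => p.1 ∈ S))).submatrix
          (sigEquiv S) (sigEquiv S) := by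
      ext p q
      rfl
    unfold logdet2 Ff Dd
    rw [hmat, det_submatrix_equiv_self]
  constructor
  · unfold gFun
    haveI : IsEmpty {p : Σ i, Fin (nb i) // p.1 ∈ (∅ : Finset (Fin NB))} :=
      ⟨fun p => absurd p.2 (by simp)⟩
    simp [logdet2, Matrix.det_isEmpty]
  · intro S T
    have sOf_union : Finset.univ.filter (fun p : Σ i, Fin (nb i) => p.1 ∈ S ∪ T)
        = Finset.univ.filter (fun p : Σ i, Fin (nb i) => p.1 ∈ S) ∪ Finset.univ.filter (fun p : Σ i, Fin (nb i) => p.1 ∈ T) := by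
      ext p
      simp only [Finset.mem_union, Finset.mem_filter, Finset.mem_univ, true_and]
    have sOf_inter : Finset.univ.filter (fun p : Σ i, Fin (nb i) => p.1 ∈ S ∩ T)
        = Finset.univ.filter (fun p : Σ i, Fin (nb i) => p.1 ∈ S) ∩ Finset.univ.filter (fun p : Σ i, Fin (nb i) => p.1 ∈ T) := by
      ext p
      simp only [Finset.mem_inter, Finset.mem_filter, Finset.mem_univ, true_and]
    have hsum : (∑ i ∈ S ∪ T, logdet2 (blockSub (A * Aᴴ) {i} {i} + blockSub Ω {i} {i}))
        + (∑ i ∈ S ∩ T, logdet2 (blockSub (A * Aᴴ) {i} {i} + blockSub Ω {i} {i}))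
        = (∑ i ∈ S, logdet2 (blockSub (A * Aᴴ) {i} {i} + blockSub Ω {i} {i}))
        + (∑ i ∈ T, logdet2 (blockSub (A * Aᴴ) {i} {i} + blockSub Ω {i} {i})) :=
      Finset.sum_union_inter
    have hFf := Ff_submodular hΩ (Finset.univ.filter (fun p : Σ i, Fin (nb i) => p.1 ∈ S))
      (Finset.univ.filter (fun p : Σ i, Fin (nb i) => p.1 ∈ T))
    unfold gFun
    rw [glue S, glue T, glue (S ∪ T), glue (S ∩ T), sOf_union, sOf_inter]
    linarith
end

section
/- Fix the block setup and the function $g_S(A,\Omega)$ defined in the context, with $A \in \mathbb{C}^{n_B \times n_M}$ arbitrary and $\Omega \in \mathbb{C}^{n_B \times n_B}$ Hermitian positive definite. Then $g$ is monotone nondecreasing: for all subsets $S \subseteq T \subseteq \{1,\dots,N_B\}$, $0 \le g_S(A,\Omega) \le g_T(A,\Omega)$. -/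
open Matrix
open scoped ComplexOrder

/-! ### Auxiliary general matrix lemmas -/

section aux
variable {m n : Type*} [Fintype m] [Fintype n] [DecidableEq m] [DecidableEq n]

/-- A principal submatrix (along an injective map) of a positive definite matrix is
positive definite. -/
lemma posDef_submatrix_inj {M : Matrix n n ℂ} (hM : M.PosDef) {f : m → n}
    (hf : Function.Injective f) : (M.submatrix f f).PosDef := by
  set B : Matrix n m ℂ := (1 : Matrix n n ℂ).submatrix id f with hB
  have hsub : M.submatrix f f = Bᴴ * M * B := by
    ext i j
    simp [hB, Matrix.mul_apply, conjTranspose_apply, one_apply, apply_ite, eq_comm]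
  rw [posDef_iff_dotProduct_mulVec]
  constructor
  · rw [hsub]
    have : (Bᴴ * M * B)ᴴ = Bᴴ * Mᴴ * B := by
      simp [conjTranspose_mul, Matrix.mul_assoc]
    rw [IsHermitian, this, hM.1]
  · intro x hx
    have hBx : B *ᵥ x ≠ 0 := by
      intro h
      obtain ⟨i, hi⟩ := Function.ne_iff.mp hx
      apply hi
      have := congrFun h (f i)
      simpa [hB, mulVec, dotProduct, one_apply, hf.eq_iff, eq_comm] using this
    rw [hsub, ← Matrix.mulVec_mulVec, ← Matrix.mulVec_mulVec, dotProduct_mulVec (star x) Bᴴ,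
      ← star_mulVec]
    exact hM.dotProduct_mulVec_pos hBx

/-- `det (1 + R) ≥ 1` for `R` positive semidefinite. -/
lemma one_le_det_one_add {R : Matrix n n ℂ} (hR : R.PosSemidef) :
    1 ≤ ((1 : Matrix n n ℂ) + R).det := by
  have hU := hR.1.spectral_theorem
  set U : Matrix n n ℂ := (hR.1.eigenvectorUnitary : Matrix n n ℂ) with hUdef
  set D : Matrix n n ℂ := diagonal (RCLike.ofReal ∘ hR.1.eigenvalues) with hD
  have hUU : U * star U = 1 := (Matrix.mem_unitaryGroup_iff).mp hR.1.eigenvectorUnitary.2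
  have h1 : (1 : Matrix n n ℂ) + R = U * (1 + D) * star U := by
    rw [Matrix.mul_add, Matrix.add_mul, Matrix.mul_one, hUU, hU, Unitary.conjStarAlgAut_apply]
  have hdetU : U.det * (star U).det = 1 := by rw [← Matrix.det_mul, hUU, Matrix.det_one]
  have hdet : ((1 : Matrix n n ℂ) + R).det = (1 + D).det := by
    rw [h1, Matrix.det_mul, Matrix.det_mul]
    calc U.det * (1 + D).det * (star U).det
        = (1 + D).det * (U.det * (star U).det) := by ring
      _ = (1 + D).det := by rw [hdetU, mul_one]
  rw [hdet, hD, ← Matrix.diagonal_one, Matrix.diagonal_add, Matrix.det_diagonal]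
  have hcast : (∏ i, ((1 : ℂ) + (RCLike.ofReal ∘ hR.1.eigenvalues) i))
      = ((∏ i, (1 + hR.1.eigenvalues i) : ℝ) : ℂ) := by
    push_cast
    rfl
  rw [hcast]
  have h1le : (1:ℝ) ≤ ∏ i, (1 + hR.1.eigenvalues i) := by
    calc (1:ℝ) = ∏ _i : n, (1:ℝ) := by simp
      _ ≤ ∏ i, (1 + hR.1.eigenvalues i) :=
        Finset.prod_le_prod (fun i _ => zero_le_one)
          (fun i _ => by linarith [hR.eigenvalues_nonneg i])
  exact_mod_cast h1le

/-- The determinant of a positive semidefinite matrix is nonnegative. -/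
lemma psd_det_nonneg {Q : Matrix n n ℂ} (hQ : Q.PosSemidef) : 0 ≤ Q.det := by
  rw [hQ.1.det_eq_prod_eigenvalues]
  exact Finset.prod_nonneg fun i _ => by
    simpa using (RCLike.ofReal_nonneg (K := ℂ)).mpr (hQ.eigenvalues_nonneg i)

open scoped MatrixOrder in
/-- Adding a positive semidefinite matrix does not decrease the determinant. -/
lemma det_le_det_add {Q N : Matrix n n ℂ} (hQ : Q.PosSemidef) (hN : N.PosSemidef) :
    Q.det ≤ (Q + N).det := by
  by_cases hdQ : Q.det = 0
  · rw [hdQ]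
    exact psd_det_nonneg (hQ.add hN)
  have hQd : Q.PosDef := by
    refine posDef_iff_dotProduct_mulVec.mpr ⟨hQ.1, fun x hx => lt_of_le_of_ne (hQ.dotProduct_mulVec_nonneg x) fun h0 => hx ?_⟩
    have hQx : Q *ᵥ x = 0 := (hQ.dotProduct_mulVec_zero_iff x).mp h0.symm
    have hinj : Function.Injective (Q.mulVec) :=
      Matrix.mulVec_injective_iff_isUnit.mpr ((Matrix.isUnit_iff_isUnit_det Q).mpr (isUnit_iff_ne_zero.mpr hdQ))
    exact hinj (a₁ := x) (a₂ := 0) (by simpa using hQx)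
  set S := CFC.sqrt Q with hSdef
  have hS : S.PosSemidef := (CFC.sqrt_nonneg Q).posSemidef
  have hSS : S * S = Q := CFC.sqrt_mul_sqrt_self Q hQ.nonneg
  have hdetS : S.det ≠ 0 := by
    intro h0
    apply hdQ
    rw [← hSS, Matrix.det_mul, h0, mul_zero]
  have hSinv : S⁻¹.IsHermitian := hS.1.inv
  set R := S⁻¹ * N * S⁻¹ with hRdef
  have hRpsd : R.PosSemidef := by
    have := hN.mul_mul_conjTranspose_same S⁻¹
    rwa [hSinv.eq] at this
  have key : Q + N = S * (1 + R) * S := by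
    rw [Matrix.mul_add, Matrix.add_mul, Matrix.mul_one, hSS, hRdef]
    congr 1
    rw [← Matrix.mul_assoc, ← Matrix.mul_assoc, Matrix.mul_nonsing_inv _ hdetS.isUnit,
      Matrix.one_mul, Matrix.mul_assoc, Matrix.nonsing_inv_mul _ hdetS.isUnit, Matrix.mul_one]
  have hdet : (Q + N).det = Q.det * (1 + R).det := by
    rw [key, Matrix.det_mul, Matrix.det_mul, ← hSS, Matrix.det_mul]
    ring
  rw [hdet]
  calc Q.det = Q.det * 1 := (mul_one _).symm
    _ ≤ Q.det * (1 + R).det :=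
      mul_le_mul_of_nonneg_left (one_le_det_one_add hRpsd) hQd.det_pos.le

/-- Fischer's inequality for a 2×2 block decomposition. -/
lemma fischer_sum {M : Matrix (m ⊕ n) (m ⊕ n) ℂ} (hM : M.PosDef) :
    M.det ≤ M.toBlocks₁₁.det * M.toBlocks₂₂.det := by
  set A := M.toBlocks₁₁ with hA
  set B := M.toBlocks₁₂ with hB
  set D := M.toBlocks₂₂ with hD
  have hApd : A.PosDef := by
    have := posDef_submatrix_inj hM Sum.inl_injective
    convert this using 1
    rfl
  have hDpd : D.PosDef := by
    have := posDef_submatrix_inj hM Sum.inr_injective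
    convert this using 1
    rfl
  have hC : M.toBlocks₂₁ = Bᴴ := by
    ext i j
    have := congrFun (congrFun hM.1.eq (Sum.inr i)) (Sum.inl j)
    simpa [conjTranspose_apply, hB, toBlocks₂₁, toBlocks₁₂] using this.symm
  have hMblocks : M = fromBlocks A B Bᴴ D := by
    rw [← hC, hA, hB, hD, fromBlocks_toBlocks]
  haveI : Invertible A := hApd.isUnit.invertible
  have hdet : M.det = A.det * (D - Bᴴ * A⁻¹ * B).det := by
    rw [hMblocks, det_fromBlocks₁₁, invOf_eq_nonsing_inv]
  have hSchurPsd : (D - Bᴴ * A⁻¹ * B).PosSemidef := by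
    rw [← Matrix.PosDef.fromBlocks₁₁ B D hApd, ← hMblocks]
    exact hM.posSemidef
  have hKey : (D - Bᴴ * A⁻¹ * B).det ≤ D.det := by
    have hBAB : (Bᴴ * A⁻¹ * B).PosSemidef :=
      hApd.inv.posSemidef.conjTranspose_mul_mul_same B
    have := det_le_det_add hSchurPsd hBAB
    rwa [sub_add_cancel] at this
  rw [hdet]
  exact mul_le_mul_of_nonneg_left hKey hApd.det_pos.le

lemma re_pos_of_pos {z : ℂ} (h : 0 < z) : 0 < z.re := by
  have := (Complex.lt_def.mp h).1
  simpa using this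

lemma eq_ofReal_of_pos {z : ℂ} (h : 0 < z) : z = (z.re : ℂ) := by
  apply Complex.ext
  · simp
  · simpa using ((Complex.lt_def.mp h).2).symm

lemma re_le_re_of_le {z w : ℂ} (h : z ≤ w) : z.re ≤ w.re := (Complex.le_def.mp h).1

end aux

/-! ### Lemmas about `blockSub` -/

section blocks
variable {NB : ℕ} {nb : Fin NB → ℕ} {Ω : Matrix (Σ i, Fin (nb i)) (Σ i, Fin (nb i)) ℂ}

lemma blockSub_posDef (hΩ : Ω.PosDef) (S : Finset (Fin NB)) :
    (blockSub Ω S S).PosDef :=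
  posDef_submatrix_inj hΩ Subtype.val_injective

/-- The sum-type splitting of a disjoint union of blocks. -/
def unionEquiv (S T : Finset (Fin NB)) (hd : Disjoint S T) :
    ({p : Σ i, Fin (nb i) // p.1 ∈ S} ⊕ {p : Σ i, Fin (nb i) // p.1 ∈ T})
      ≃ {p : Σ i, Fin (nb i) // p.1 ∈ S ∪ T} where
  toFun := Sum.elim (fun p => ⟨p.1, Finset.mem_union_left _ p.2⟩)
    (fun p => ⟨p.1, Finset.mem_union_right _ p.2⟩)
  invFun p := if h : p.1.1 ∈ S then Sum.inl ⟨p.1, h⟩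
    else Sum.inr ⟨p.1, (Finset.mem_union.mp p.2).resolve_left h⟩
  left_inv := by
    rintro (⟨p, hp⟩ | ⟨p, hp⟩)
    · simp [hp]
    · simp [Finset.disjoint_right.mp hd hp]
  right_inv := by
    rintro ⟨p, hp⟩
    by_cases h : p.1 ∈ S <;> simp [h]

/-- Fischer's inequality in `blockSub` form. -/
lemma fischer_blockSub (hΩ : Ω.PosDef) {S T : Finset (Fin NB)} (hd : Disjoint S T) :
    (blockSub Ω (S ∪ T) (S ∪ T)).det ≤ (blockSub Ω S S).det * (blockSub Ω T T).det := by
  set g : ({p : Σ i, Fin (nb i) // p.1 ∈ S} ⊕ {p : Σ i, Fin (nb i) // p.1 ∈ T}) →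
      (Σ i, Fin (nb i)) := Sum.elim Subtype.val Subtype.val with hg
  have hginj : Function.Injective g := by
    rintro (⟨p, hp⟩ | ⟨p, hp⟩) (⟨q, hq⟩ | ⟨q, hq⟩) h <;> simp [hg] at h <;>
      first
        | (subst h; rfl)
        | (exact absurd hq (by subst h; exact Finset.disjoint_left.mp hd hp))
        | (exact absurd hp (by subst h; exact Finset.disjoint_left.mp hd hq))
  have hN' : (Ω.submatrix g g).PosDef := posDef_submatrix_inj hΩ hginj
  have hdet : (blockSub Ω (S ∪ T) (S ∪ T)).det = (Ω.submatrix g g).det := by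
    rw [← Matrix.det_submatrix_equiv_self (unionEquiv S T hd) (blockSub Ω (S ∪ T) (S ∪ T))]
    congr 1
    ext x y
    cases x <;> cases y <;> rfl
  have h11 : (Ω.submatrix g g).toBlocks₁₁ = blockSub Ω S S := rfl
  have h22 : (Ω.submatrix g g).toBlocks₂₂ = blockSub Ω T T := rfl
  rw [hdet, ← h11, ← h22]
  exact fischer_sum hN'

lemma det_blockSub_congr {S S' : Finset (Fin NB)} (h : S = S') :
    (blockSub Ω S S).det = (blockSub Ω S' S').det := by subst h; rfl

set_option maxHeartbeats 1000000 in
/-- Hadamard-type inequality: the determinant of a principal block submatrix is at most the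
product of the determinants of its diagonal blocks. -/
lemma hadamard_blockSub (hM : Ω.PosDef) (S : Finset (Fin NB)) :
    (blockSub Ω S S).det ≤ ∏ i ∈ S, (blockSub Ω {i} {i}).det := by
  induction S using Finset.induction with
  | empty =>
    haveI : IsEmpty {p : Σ i, Fin (nb i) // p.1 ∈ (∅ : Finset (Fin NB))} :=
      ⟨fun p => by simpa using p.2⟩
    simp [Matrix.det_isEmpty]
  | @insert a S ha ih =>
    have hd : Disjoint ({a} : Finset (Fin NB)) S := by simpa using ha
    have h1 : (blockSub Ω (insert a S) (insert a S)).det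
        ≤ (blockSub Ω {a} {a}).det * (blockSub Ω S S).det := by
      rw [det_blockSub_congr (Finset.insert_eq a S)]
      exact fischer_blockSub hM hd
    have hpos := (blockSub_posDef hM ({a} : Finset (Fin NB))).det_pos
    have h2 : (blockSub Ω {a} {a}).det * (blockSub Ω S S).det
        ≤ (blockSub Ω {a} {a}).det * ∏ i ∈ S, (blockSub Ω {i} {i}).det :=
      mul_le_mul_of_nonneg_left ih hpos.le
    have h3 : (blockSub Ω {a} {a}).det * ∏ i ∈ S, (blockSub Ω {i} {i}).det
        = ∏ i ∈ insert a S, (blockSub Ω {i} {i}).det := by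
      rw [Finset.prod_insert ha]
    exact h3 ▸ le_trans h1 h2

end blocks

/-! ### The key nonnegativity estimate and the main theorem -/

section main
variable {NB nM : ℕ} {nb : Fin NB → ℕ}

/-- Key estimate: `log₂ det Ω_{U,U} ≤ ∑_{i ∈ U} log₂ det M_{i,i}` where `M = AA† + Ω`. -/
lemma key_nonneg (A : Matrix (Σ i, Fin (nb i)) (Fin nM) ℂ)
    {Ω : Matrix (Σ i, Fin (nb i)) (Σ i, Fin (nb i)) ℂ} (hΩ : Ω.PosDef)
    (U : Finset (Fin NB)) :
    Real.logb 2 (blockSub Ω U U).det.re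
      ≤ ∑ i ∈ U, Real.logb 2 (blockSub (A * Aᴴ + Ω) {i} {i}).det.re := by
  set M := A * Aᴴ + Ω with hM
  have hMpd : M.PosDef :=
    Matrix.PosDef.posSemidef_add (Matrix.posSemidef_self_mul_conjTranspose A) hΩ
  have hQ := blockSub_posDef hΩ U
  have hadd : blockSub Ω U U + blockSub (A * Aᴴ) U U = blockSub M U U := by
    ext i j
    exact add_comm _ _
  have h1 : (blockSub Ω U U).det ≤ (blockSub M U U).det := by
    rw [← hadd]
    exact det_le_det_add hQ.posSemidef
      ((Matrix.posSemidef_self_mul_conjTranspose A).submatrix Subtype.val)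
  have h2 := hadamard_blockSub hMpd U
  have hc : (blockSub Ω U U).det ≤ ∏ i ∈ U, (blockSub M {i} {i}).det := le_trans h1 h2
  -- pass to real parts
  have hdi : ∀ i ∈ U, 0 < (blockSub M {i} {i}).det := fun i _ =>
    (blockSub_posDef hMpd {i}).det_pos
  have hprod : (∏ i ∈ U, (blockSub M {i} {i}).det)
      = ((∏ i ∈ U, (blockSub M {i} {i}).det.re : ℝ) : ℂ) := by
    rw [Complex.ofReal_prod]
    exact Finset.prod_congr rfl fun i hi => eq_ofReal_of_pos (hdi i hi)
  have hprodre : (∏ i ∈ U, (blockSub M {i} {i}).det).re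
      = ∏ i ∈ U, (blockSub M {i} {i}).det.re := by
    rw [hprod, Complex.ofReal_re]
  have h0re : 0 < (blockSub Ω U U).det.re := re_pos_of_pos hQ.det_pos
  have hprodpos : 0 < ∏ i ∈ U, (blockSub M {i} {i}).det.re :=
    Finset.prod_pos fun i hi => re_pos_of_pos (hdi i hi)
  have hrele : (blockSub Ω U U).det.re ≤ ∏ i ∈ U, (blockSub M {i} {i}).det.re := by
    have := re_le_re_of_le hc
    rwa [hprodre] at this
  calc Real.logb 2 (blockSub Ω U U).det.re
      ≤ Real.logb 2 (∏ i ∈ U, (blockSub M {i} {i}).det.re) :=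
        (Real.logb_le_logb (by norm_num) h0re hprodpos).mpr hrele
    _ = ∑ i ∈ U, Real.logb 2 (blockSub M {i} {i}).det.re :=
        Real.logb_prod _ _ fun i hi => (re_pos_of_pos (hdi i hi)).ne'

/-- `g` is nonnegative and monotone nondecreasing. -/
theorem gFun_monotone {NB nM : ℕ} {nb : Fin NB → ℕ}
    (A : Matrix (Σ i, Fin (nb i)) (Fin nM) ℂ)
    (Ω : Matrix (Σ i, Fin (nb i)) (Σ i, Fin (nb i)) ℂ) (hΩ : Ω.PosDef)
    (S T : Finset (Fin NB)) (hST : S ⊆ T) :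
    0 ≤ gFun A Ω S ∧ gFun A Ω S ≤ gFun A Ω T := by
  have hsummand : ∀ i : Fin NB,
      blockSub (A * Aᴴ) {i} {i} + blockSub Ω {i} {i} = blockSub (A * Aᴴ + Ω) {i} {i} :=
    fun i => by ext p q; rfl
  have hgFun : ∀ W : Finset (Fin NB), gFun A Ω W =
      (∑ i ∈ W, Real.logb 2 (blockSub (A * Aᴴ + Ω) {i} {i}).det.re) -
        Real.logb 2 (blockSub Ω W W).det.re := by
    intro W
    unfold gFun logdet2
    congr 1
  constructor
  · rw [hgFun S]
    have := key_nonneg A hΩ S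
    linarith
  · rw [hgFun S, hgFun T]
    -- Fischer for the split T = S ∪ (T \ S)
    have hd : Disjoint S (T \ S) := Finset.disjoint_sdiff
    have hTT : (blockSub Ω T T).det
        ≤ (blockSub Ω S S).det * (blockSub Ω (T \ S) (T \ S)).det := by
      rw [det_blockSub_congr (Finset.union_sdiff_of_subset hST).symm]
      exact fischer_blockSub hΩ hd
    have hSpos := (blockSub_posDef hΩ S).det_pos
    have hDpos := (blockSub_posDef hΩ (T \ S)).det_pos
    have hTpos := (blockSub_posDef hΩ T).det_pos
    have hmulre : ((blockSub Ω S S).det * (blockSub Ω (T \ S) (T \ S)).det).re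
        = (blockSub Ω S S).det.re * (blockSub Ω (T \ S) (T \ S)).det.re := by
      rw [eq_ofReal_of_pos hSpos, eq_ofReal_of_pos hDpos, ← Complex.ofReal_mul]
      simp
    have hrele : (blockSub Ω T T).det.re
        ≤ (blockSub Ω S S).det.re * (blockSub Ω (T \ S) (T \ S)).det.re := by
      have := re_le_re_of_le hTT
      rwa [hmulre] at this
    have hlogT : Real.logb 2 (blockSub Ω T T).det.re
        ≤ Real.logb 2 (blockSub Ω S S).det.re
          + Real.logb 2 (blockSub Ω (T \ S) (T \ S)).det.re := by
      have hmpos : 0 < (blockSub Ω S S).det.re * (blockSub Ω (T \ S) (T \ S)).det.re :=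
        mul_pos (re_pos_of_pos hSpos) (re_pos_of_pos hDpos)
      calc Real.logb 2 (blockSub Ω T T).det.re
          ≤ Real.logb 2 ((blockSub Ω S S).det.re * (blockSub Ω (T \ S) (T \ S)).det.re) :=
            (Real.logb_le_logb (by norm_num) (re_pos_of_pos hTpos) hmpos).mpr hrele
        _ = _ := Real.logb_mul (re_pos_of_pos hSpos).ne' (re_pos_of_pos hDpos).ne'
    have hkey := key_nonneg A hΩ (T \ S)
    have hsplit : (∑ i ∈ T \ S, Real.logb 2 (blockSub (A * Aᴴ + Ω) {i} {i}).det.re)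
        + ∑ i ∈ S, Real.logb 2 (blockSub (A * Aᴴ + Ω) {i} {i}).det.re
        = ∑ i ∈ T, Real.logb 2 (blockSub (A * Aᴴ + Ω) {i} {i}).det.re :=
      Finset.sum_sdiff hST
    linarith

end main
end

section
/- Fix the block setup and the function $g_S(A,\Omega)$ defined in the context, with $A \in \mathbb{C}^{n_B \times n_M}$ arbitrary and $\Omega \in \mathbb{C}^{n_B \times n_B}$ Hermitian positive definite. Let $S \subseteq \{1,\dots,N_B\}$ be nonempty and let $i \notin S$. Then $g_{S \cup \{i\}}(A,\Omega) - g_S(A,\Omega) = \log_2 \det\big((AA^{\dagger})_{i,i} + \Omega_{i,i}\big) - \log_2 \det\big(\Omega_{i,i} - \Omega_{i,S}\,\Omega_{S,S}^{-1}\,\Omega_{S,i}\big)$, where $\Omega_{i,S} := \Omega_{\{i\},S}$ and $\Omega_{S,i} := \Omega_{S,\{i\}}$; in particular the Schur complement $\Omega_{i,i} - \Omega_{i,S}\Omega_{S,S}^{-1}\Omega_{S,i}$ is positive definite so the right-hand side is well defined. -/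
open Matrix
open scoped ComplexOrder

namespace GFunAux

open Matrix

/-- A principal submatrix along an injective map of a positive definite matrix is
positive definite. -/
lemma posDef_submatrix_inj {m n : Type*} [Fintype m] [Fintype n] [DecidableEq m]
    [DecidableEq n] {M : Matrix n n ℂ} (hM : M.PosDef) (e : m → n)
    (he : Function.Injective e) : (M.submatrix e e).PosDef := by
  refine PosDef.of_dotProduct_mulVec_pos (hM.1.submatrix e) fun x hx => ?_
  set P : Matrix n m ℂ := (1 : Matrix n n ℂ).submatrix id e with hP
  have hsub : M.submatrix e e = Pᴴ * M * P := by
    have h1 : M = 1 * M * 1 := by simp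
    rw [h1, submatrix_mul (he₂ := Function.bijective_id),
      submatrix_mul (he₂ := Function.bijective_id), submatrix_id_id]
    simp [hP, conjTranspose_submatrix]
  have hPx : P *ᵥ x ≠ 0 := by
    intro h0
    apply hx
    funext a
    have hval : (P *ᵥ x) (e a) = x a := by
      simp [hP, mulVec, dotProduct, Matrix.one_apply, he.eq_iff]
    rw [h0] at hval
    simpa using hval.symm
  have := hM.dotProduct_mulVec_pos hPx
  rw [hsub]
  simpa only [star_mulVec, dotProduct_mulVec, vecMul_vecMul] using this

/-- The Schur complement of the lower-right block of a positive definite block matrix is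
positive definite. -/
lemma schur_posDef {m n : Type*} [Fintype m] [Fintype n] [DecidableEq m] [DecidableEq n]
    {A : Matrix m m ℂ} {B : Matrix m n ℂ} {D : Matrix n n ℂ}
    (h : (fromBlocks A B Bᴴ D).PosDef) (hD : D.PosDef) :
    (A - B * D⁻¹ * Bᴴ).PosDef := by
  haveI := hD.isUnit.invertible
  refine PosDef.of_dotProduct_mulVec_pos ((IsHermitian.fromBlocks₂₂ A B hD.1).mp h.1) fun x hx => ?_
  have hxy : (x ⊕ᵥ -((D⁻¹ * Bᴴ) *ᵥ x)) ≠ 0 := by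
    intro hc
    exact hx (funext fun a => congrFun hc (Sum.inl a))
  have hq := h.dotProduct_mulVec_pos hxy
  have heq := schur_complement_eq₂₂ A B x (-((D⁻¹ * Bᴴ) *ᵥ x)) hD.1
  rw [dotProduct_mulVec] at hq
  rw [heq] at hq
  simpa [dotProduct_mulVec] using hq

/-- The natural equivalence splitting the indices of `insert i S` into the `i`-part and the
`S`-part. -/
def sumEquiv {NB : ℕ} {nb : Fin NB → ℕ} (S : Finset (Fin NB)) (i : Fin NB) (hi : i ∉ S) :
    ({p : Σ j, Fin (nb j) // p.1 ∈ ({i} : Finset (Fin NB))} ⊕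
        {p : Σ j, Fin (nb j) // p.1 ∈ S}) ≃
      {p : Σ j, Fin (nb j) // p.1 ∈ insert i S} where
  toFun := Sum.elim
    (fun p => ⟨p.1, by
      have h := Finset.mem_singleton.mp p.2
      simp [h]⟩)
    (fun p => ⟨p.1, Finset.mem_insert_of_mem p.2⟩)
  invFun p := if h : p.1.1 ∈ S then Sum.inr ⟨p.1, h⟩
    else Sum.inl ⟨p.1, by
      have h2 := Finset.mem_insert.mp p.2
      simp [h2.resolve_right h]⟩
  left_inv x := by
    rcases x with ⟨p, hp⟩ | ⟨p, hp⟩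
    · have h1 : p.1 = i := Finset.mem_singleton.mp hp
      simp [h1, hi]
    · simp [hp]
  right_inv p := by
    by_cases h : p.1.1 ∈ S <;> simp [h]

end GFunAux

/-- Increment identity for `g`: adjoining a block `i ∉ S` increases `g_S` by
`log₂ det((AA†)_{i,i} + Ω_{i,i}) - log₂ det(Ω_{i,i} - Ω_{i,S} Ω_{S,S}⁻¹ Ω_{S,i})`,
and the Schur complement appearing is positive definite. -/
theorem gFun_increment {NB nM : ℕ} {nb : Fin NB → ℕ}
    (A : Matrix (Σ i, Fin (nb i)) (Fin nM) ℂ)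
    (Ω : Matrix (Σ i, Fin (nb i)) (Σ i, Fin (nb i)) ℂ) (hΩ : Ω.PosDef)
    (S : Finset (Fin NB)) (hS : S.Nonempty) (i : Fin NB) (hi : i ∉ S) :
    (blockSub Ω {i} {i} -
        blockSub Ω {i} S * (blockSub Ω S S)⁻¹ * blockSub Ω S {i}).PosDef ∧
      gFun A Ω (insert i S) - gFun A Ω S =
        logdet2 (blockSub (A * Aᴴ) {i} {i} + blockSub Ω {i} {i}) -
          logdet2 (blockSub Ω {i} {i} -
            blockSub Ω {i} S * (blockSub Ω S S)⁻¹ * blockSub Ω S {i}) := by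
  classical
  set T : Finset (Fin NB) := insert i S with hT
  have hC : blockSub Ω S {i} = (blockSub Ω {i} S)ᴴ := by
    ext p q
    simpa [blockSub, conjTranspose_apply] using (hΩ.1.apply p.1 q.1).symm
  have hSS : (blockSub Ω S S).PosDef :=
    GFunAux.posDef_submatrix_inj hΩ _ Subtype.val_injective
  have hTT : (blockSub Ω T T).PosDef :=
    GFunAux.posDef_submatrix_inj hΩ _ Subtype.val_injective
  let e := GFunAux.sumEquiv (nb := nb) S i hi
  have hFB : (blockSub Ω T T).submatrix e e =
      fromBlocks (blockSub Ω {i} {i}) (blockSub Ω {i} S)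
        (blockSub Ω S {i}) (blockSub Ω S S) := by
    ext x y
    cases x <;> cases y <;> rfl
  have hFBpd : (fromBlocks (blockSub Ω {i} {i}) (blockSub Ω {i} S)
      (blockSub Ω {i} S)ᴴ (blockSub Ω S S)).PosDef := by
    rw [← hC, ← hFB]
    exact GFunAux.posDef_submatrix_inj hTT e e.injective
  have hSchur : (blockSub Ω {i} {i} -
      blockSub Ω {i} S * (blockSub Ω S S)⁻¹ * blockSub Ω S {i}).PosDef := by
    rw [hC]
    exact GFunAux.schur_posDef hFBpd hSS
  refine ⟨hSchur, ?_⟩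
  haveI := hSS.isUnit.invertible
  have hdet : (blockSub Ω T T).det =
      (blockSub Ω S S).det *
        (blockSub Ω {i} {i} -
          blockSub Ω {i} S * (blockSub Ω S S)⁻¹ * blockSub Ω S {i}).det := by
    rw [← det_submatrix_equiv_self e, hFB, det_fromBlocks₂₂, invOf_eq_nonsing_inv]
  have h1 := hSS.det_pos
  have h2 := hSchur.det_pos
  rw [Complex.lt_def] at h1 h2
  simp only [Complex.zero_re, Complex.zero_im] at h1 h2
  have hre : (blockSub Ω T T).det.re =
      (blockSub Ω S S).det.re *
        (blockSub Ω {i} {i} -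
          blockSub Ω {i} S * (blockSub Ω S S)⁻¹ * blockSub Ω S {i}).det.re := by
    rw [hdet, Complex.mul_re, ← h1.2, ← h2.2]
    ring
  have hlog : logdet2 (blockSub Ω T T) =
      logdet2 (blockSub Ω S S) +
        logdet2 (blockSub Ω {i} {i} -
          blockSub Ω {i} S * (blockSub Ω S S)⁻¹ * blockSub Ω S {i}) := by
    unfold logdet2
    rw [hre, Real.logb_mul h1.1.ne' h2.1.ne']
  have hsum : gFun A Ω T =
      logdet2 (blockSub (A * Aᴴ) {i} {i} + blockSub Ω {i} {i}) +
        (∑ j ∈ S, logdet2 (blockSub (A * Aᴴ) {j} {j} + blockSub Ω {j} {j})) -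
        logdet2 (blockSub Ω T T) := by
    rw [gFun, hT, Finset.sum_insert hi]
  rw [hsum, hlog, gFun]
  ring
end

section
/- Fix the block setup, the functions $f_k, f'_k, g_S, g'_S$ and $\varphi$ as defined in the context, weights $w_1,\dots,w_N \ge 0$, and backhaul capacities $C_1,\dots,C_{N_B} \in \mathbb{R}$. Let $(R^t, \Omega^t)$ and $(R^{t+1}, \Omega^{t+1})$ be tuples with each $R^t_j, R^{t+1}_j$ Hermitian positive semidefinite and $\Omega^t, \Omega^{t+1}$ Hermitian positive definite. Suppose that (a) $g'_S(R^{t+1},\Omega^{t+1}; R^t,\Omega^t) \le \sum_{i \in S} C_i$ for all $S \subseteq \{1,\dots,N_B\}$, and (b) $\sum_{k=1}^{N} w_k f'_k(R^{t+1},\Omega^{t+1}; R^t,\Omega^t) \ge \sum_{k=1}^{N} w_k f'_k(R^t,\Omega^t; R^t,\Omega^t)$. Then $g_S(R^{t+1},\Omega^{t+1}) \le \sum_{i \in S} C_i$ for all $S \subseteq \{1,\dots,N_B\}$, and $\sum_{k=1}^{N} w_k f_k(R^{t+1},\Omega^{t+1}) \ge \sum_{k=1}^{N} w_k f_k(R^t,\Omega^t)$.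 -/
open Matrix
open scoped ComplexOrder

/-- The first-order surrogate `φ(X,Y) = log₂ det Y + (1/ln 2) tr(Y⁻¹(X-Y))`. -/
noncomputable def phiSurr {ι : Type*} [Fintype ι] [DecidableEq ι]
    (X Y : Matrix ι ι ℂ) : ℝ :=
  logdet2 Y + (1 / Real.log 2) * (Y⁻¹ * (X - Y)).trace.re

/-- The achievable rate `f_k(R,Ω)` of mobile station `k`. -/
noncomputable def rateFk {NB m N : ℕ} {nb : Fin NB → ℕ}
    (H : Fin N → Matrix (Fin m) (Σ i, Fin (nb i)) ℂ) (k : Fin N)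
    (R : Fin N → Matrix (Σ i, Fin (nb i)) (Σ i, Fin (nb i)) ℂ)
    (Ω : Matrix (Σ i, Fin (nb i)) (Σ i, Fin (nb i)) ℂ) : ℝ :=
  logdet2 (1 + H k * ((∑ j, R j) + Ω) * (H k)ᴴ) -
    logdet2 (1 + H k * ((∑ j ∈ Finset.univ \ {k}, R j) + Ω) * (H k)ᴴ)

/-- The MM surrogate `f'_k(R,Ω;R',Ω')` of `f_k`. -/
noncomputable def rateFk' {NB m N : ℕ} {nb : Fin NB → ℕ}
    (H : Fin N → Matrix (Fin m) (Σ i, Fin (nb i)) ℂ) (k : Fin N)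
    (R : Fin N → Matrix (Σ i, Fin (nb i)) (Σ i, Fin (nb i)) ℂ)
    (Ω : Matrix (Σ i, Fin (nb i)) (Σ i, Fin (nb i)) ℂ)
    (R' : Fin N → Matrix (Σ i, Fin (nb i)) (Σ i, Fin (nb i)) ℂ)
    (Ω' : Matrix (Σ i, Fin (nb i)) (Σ i, Fin (nb i)) ℂ) : ℝ :=
  logdet2 (1 + H k * ((∑ j, R j) + Ω) * (H k)ᴴ) -
    phiSurr (1 + H k * ((∑ j ∈ Finset.univ \ {k}, R j) + Ω) * (H k)ᴴ)
      (1 + H k * ((∑ j ∈ Finset.univ \ {k}, R' j) + Ω') * (H k)ᴴ)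

/-- The backhaul constraint function `g_S(R,Ω)`. -/
noncomputable def gRFun {NB N : ℕ} {nb : Fin NB → ℕ}
    (R : Fin N → Matrix (Σ i, Fin (nb i)) (Σ i, Fin (nb i)) ℂ)
    (Ω : Matrix (Σ i, Fin (nb i)) (Σ i, Fin (nb i)) ℂ) (S : Finset (Fin NB)) : ℝ :=
  (∑ i ∈ S, logdet2 (blockSub (∑ j, R j) {i} {i} + blockSub Ω {i} {i})) -
    logdet2 (blockSub Ω S S)

/-- The MM surrogate `g'_S(R,Ω;R',Ω')` of `g_S`. -/
noncomputable def gRFun' {NB N : ℕ} {nb : Fin NB → ℕ}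
    (R : Fin N → Matrix (Σ i, Fin (nb i)) (Σ i, Fin (nb i)) ℂ)
    (Ω : Matrix (Σ i, Fin (nb i)) (Σ i, Fin (nb i)) ℂ)
    (R' : Fin N → Matrix (Σ i, Fin (nb i)) (Σ i, Fin (nb i)) ℂ)
    (Ω' : Matrix (Σ i, Fin (nb i)) (Σ i, Fin (nb i)) ℂ) (S : Finset (Fin NB)) : ℝ :=
  (∑ i ∈ S, phiSurr (blockSub (∑ j, R j) {i} {i} + blockSub Ω {i} {i})
      (blockSub (∑ j, R' j) {i} {i} + blockSub Ω' {i} {i})) -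
    logdet2 (blockSub Ω S S)


open Matrix
open scoped ComplexOrder

section AuxMM
variable {ι : Type*} [Fintype ι] [DecidableEq ι]

lemma mmAux_posDef_conj_of_isUnit {X B : Matrix ι ι ℂ} (hX : X.PosDef) (hB : IsUnit B) :
    (Bᴴ * X * B).PosDef := by
  have hinj := Matrix.mulVec_injective_iff_isUnit.mpr hB
  exact hX.conjTranspose_mul_mul_same hinj

lemma mmAux_trace_eq_sum_eigenvalues {A : Matrix ι ι ℂ} (hA : A.IsHermitian) :
    A.trace = ∑ i, (hA.eigenvalues i : ℂ) := by
  exact hA.trace_eq_sum_eigenvalues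

lemma mmAux_detRePos {A : Matrix ι ι ℂ} (hA : A.PosDef) : 0 < A.det.re :=
  (Complex.lt_def.mp hA.det_pos).1

lemma mmAux_detOfReal {A : Matrix ι ι ℂ} (hA : A.PosDef) : (A.det.re : ℂ) = A.det := by
  have h := (Complex.lt_def.mp hA.det_pos).2
  exact Complex.ext rfl (by simpa using h)

lemma mmAux_posDef_submatrix_of_injective {κ : Type*} [Fintype κ] [DecidableEq κ]
    {M : Matrix ι ι ℂ} (hM : M.PosDef) {e : κ → ι} (he : Function.Injective e) :
    (M.submatrix e e).PosDef := by
  exact hM.submatrix he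

open scoped MatrixOrder in
lemma mmAux_log_det_le {X Y : Matrix ι ι ℂ} (hX : X.PosDef) (hY : Y.PosDef) :
    Real.log X.det.re ≤ Real.log Y.det.re + (Y⁻¹ * (X - Y)).trace.re := by
  classical
  have hYi : (Y⁻¹).PosDef := hY.inv
  set S := CFC.sqrt (Y⁻¹) with hSdef
  have hSps : S.PosSemidef := Matrix.nonneg_iff_posSemidef.mp (CFC.sqrt_nonneg _)
  have hSS : S * S = Y⁻¹ := CFC.sqrt_mul_sqrt_self (Y⁻¹) hYi.posSemidef.nonneg
  have hSunit : IsUnit S := by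
    have h1 : IsUnit (S * S).det := by rw [hSS]; exact (isUnit_iff_isUnit_det _).mp hYi.isUnit
    rw [Matrix.det_mul] at h1
    exact (isUnit_iff_isUnit_det _).mpr (isUnit_of_mul_isUnit_left h1)
  have hM : (S * X * S).PosDef := by
    have h := mmAux_posDef_conj_of_isUnit hX hSunit
    rwa [hSps.1] at h
  set M := S * X * S with hMdef
  have htrM : M.trace = (Y⁻¹ * X).trace := by
    rw [hMdef, Matrix.trace_mul_cycle, hSS]
  have htr : (Y⁻¹ * (X - Y)).trace.re = M.trace.re - Fintype.card ι := by
    have h1 : Y⁻¹ * (X - Y) = Y⁻¹ * X - 1 := by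
      rw [Matrix.mul_sub, Matrix.nonsing_inv_mul Y ((isUnit_iff_isUnit_det _).mp hY.isUnit)]
    rw [h1, Matrix.trace_sub, Matrix.trace_one, ← htrM]
    simp
  have hYdet : IsUnit Y.det := (isUnit_iff_isUnit_det _).mp hY.isUnit
  have hY0 : Y.det ≠ 0 := hYdet.ne_zero
  have hdetM : X.det = M.det * Y.det := by
    have h3 : M.det = S.det * X.det * S.det := by rw [hMdef, Matrix.det_mul, Matrix.det_mul]
    have h2 : S.det * S.det * Y.det = 1 := by
      rw [← Matrix.det_mul, hSS, Matrix.det_nonsing_inv, Ring.inverse_eq_inv']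
      exact inv_mul_cancel₀ hY0
    rw [h3]
    linear_combination (-X.det) * h2
  have hdetMre : X.det.re = M.det.re * Y.det.re := by
    rw [← mmAux_detOfReal hM, ← mmAux_detOfReal hY] at hdetM
    simpa using congrArg Complex.re hdetM
  have hdetprod : M.det.re = ∏ i, hM.1.eigenvalues i := by
    rw [hM.1.det_eq_prod_eigenvalues]
    norm_cast
  have htrsum : M.trace.re = ∑ i, hM.1.eigenvalues i := by
    rw [mmAux_trace_eq_sum_eigenvalues hM.1, ← Complex.ofReal_sum, Complex.ofReal_re]
  have hkey : Real.log M.det.re ≤ M.trace.re - Fintype.card ι := by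
    rw [hdetprod, htrsum, Real.log_prod (fun i _ => (hM.eigenvalues_pos i).ne')]
    calc ∑ i, Real.log (hM.1.eigenvalues i) ≤ ∑ i, (hM.1.eigenvalues i - 1) :=
          Finset.sum_le_sum fun i _ => Real.log_le_sub_one_of_pos (hM.eigenvalues_pos i)
      _ = (∑ i, hM.1.eigenvalues i) - Fintype.card ι := by
          rw [Finset.sum_sub_distrib]
          simp
  rw [hdetMre, Real.log_mul (mmAux_detRePos hM).ne' (mmAux_detRePos hY).ne', htr]
  linarith

lemma mmAux_posSemidef_sum {κ : Type*} (s : Finset κ) (f : κ → Matrix ι ι ℂ)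
    (hf : ∀ j ∈ s, (f j).PosSemidef) : (∑ j ∈ s, f j).PosSemidef := by
  classical
  induction s using Finset.induction_on with
  | empty => simpa using Matrix.PosSemidef.zero
  | insert _ _ hx ih =>
    rw [Finset.sum_insert hx]
    exact ((hf _ (Finset.mem_insert_self _ _)).add
      (ih fun j hj => hf j (Finset.mem_insert_of_mem hj)))

end AuxMM

section GlueMM
variable {ι : Type*} [Fintype ι] [DecidableEq ι]

lemma mmAux_logdet2_le_phiSurr {X Y : Matrix ι ι ℂ} (hX : X.PosDef) (hY : Y.PosDef) :
    logdet2 X ≤ phiSurr X Y := by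
  have h2 : (0:ℝ) < Real.log 2 := Real.log_pos one_lt_two
  have h := mmAux_log_det_le hX hY
  simp only [logdet2, phiSurr, Real.logb]
  rw [show Real.log Y.det.re / Real.log 2 + 1 / Real.log 2 * (Y⁻¹ * (X - Y)).trace.re
      = (Real.log Y.det.re + (Y⁻¹ * (X - Y)).trace.re) / Real.log 2 by ring]
  exact (div_le_div_iff_of_pos_right h2).mpr h

lemma mmAux_phiSurr_self (X : Matrix ι ι ℂ) : phiSurr X X = logdet2 X := by
  simp [phiSurr]

end GlueMM

/-- Per-iteration correctness of the MM algorithm: the new iterate of the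
convexified subproblem is feasible for the original backhaul constraints and does
not decrease the true weighted sum-rate objective. -/
theorem mm_iteration_correct {NB m N : ℕ} {nb : Fin NB → ℕ}
    (H : Fin N → Matrix (Fin m) (Σ i, Fin (nb i)) ℂ)
    (w : Fin N → ℝ) (hw : ∀ k, 0 ≤ w k) (C : Fin NB → ℝ)
    (Rt Rt1 : Fin N → Matrix (Σ i, Fin (nb i)) (Σ i, Fin (nb i)) ℂ)
    (Ωt Ωt1 : Matrix (Σ i, Fin (nb i)) (Σ i, Fin (nb i)) ℂ)
    (hRt : ∀ j, (Rt j).PosSemidef) (hRt1 : ∀ j, (Rt1 j).PosSemidef)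
    (hΩt : Ωt.PosDef) (hΩt1 : Ωt1.PosDef)
    (ha : ∀ S : Finset (Fin NB), gRFun' Rt1 Ωt1 Rt Ωt S ≤ ∑ i ∈ S, C i)
    (hb : ∑ k, w k * rateFk' H k Rt Ωt Rt Ωt ≤ ∑ k, w k * rateFk' H k Rt1 Ωt1 Rt Ωt) :
    (∀ S : Finset (Fin NB), gRFun Rt1 Ωt1 S ≤ ∑ i ∈ S, C i) ∧
      ∑ k, w k * rateFk H k Rt Ωt ≤ ∑ k, w k * rateFk H k Rt1 Ωt1 := by
  classical
  have hsum1 : (∑ j, Rt1 j).PosSemidef :=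
    mmAux_posSemidef_sum Finset.univ Rt1 fun j _ => hRt1 j
  have hsum0 : (∑ j, Rt j).PosSemidef :=
    mmAux_posSemidef_sum Finset.univ Rt fun j _ => hRt j
  constructor
  · intro S
    refine le_trans ?_ (ha S)
    unfold gRFun gRFun'
    refine sub_le_sub_right (Finset.sum_le_sum fun i _ => ?_) _
    exact mmAux_logdet2_le_phiSurr
      (Matrix.PosDef.posSemidef_add (hsum1.submatrix _)
        (mmAux_posDef_submatrix_of_injective hΩt1 Subtype.val_injective))
      (Matrix.PosDef.posSemidef_add (hsum0.submatrix _)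
        (mmAux_posDef_submatrix_of_injective hΩt Subtype.val_injective))
  · have hfk : ∀ k, rateFk' H k Rt1 Ωt1 Rt Ωt ≤ rateFk H k Rt1 Ωt1 := by
      intro k
      unfold rateFk rateFk'
      refine sub_le_sub_left ?_ _
      refine mmAux_logdet2_le_phiSurr ?_ ?_
      · exact Matrix.PosDef.add_posSemidef Matrix.PosDef.one
          (((mmAux_posSemidef_sum _ _ fun j _ => hRt1 j).add
            hΩt1.posSemidef).mul_mul_conjTranspose_same (H k))
      · exact Matrix.PosDef.add_posSemidef Matrix.PosDef.one
          (((mmAux_posSemidef_sum _ _ fun j _ => hRt j).add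
            hΩt.posSemidef).mul_mul_conjTranspose_same (H k))
    have heq : ∀ k, rateFk' H k Rt Ωt Rt Ωt = rateFk H k Rt Ωt := by
      intro k
      unfold rateFk rateFk'
      rw [mmAux_phiSurr_self]
    calc ∑ k, w k * rateFk H k Rt Ωt
        = ∑ k, w k * rateFk' H k Rt Ωt Rt Ωt := by
          exact Finset.sum_congr rfl fun k _ => by rw [heq k]
      _ ≤ ∑ k, w k * rateFk' H k Rt1 Ωt1 Rt Ωt := hb
      _ ≤ ∑ k, w k * rateFk H k Rt1 Ωt1 :=
          Finset.sum_le_sum fun k _ => mul_le_mul_of_nonneg_left (hfk k) (hw k)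
end
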